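/- There exist eight nonzero complex numbers $v_{+++}, v_{++-}, v_{+-+}, v_{+--}, v_{-++}, v_{-+-}, v_{--+}, v_{---}$ and an arbitrarily small $\theta > 0$ such that the angle between any two of them whose index strings differ in exactly one position is at most $\theta$, the denominator $D = \sum$ of all eight is nonzero, and yet $\left| \mathrm{Im} \frac{v_{+++} - v_{++-} - v_{+-+} - v_{-++} + v_{+--} + v_{-+-} + v_{--+} - v_{---}}{D} \right| > \tan(\theta/2)$. -/

import Mathlib

noncomputable def cangle (u v : ℂ) : ℝ :=
  Real.arccos ((u * (starRingEnd ℂ) v).re / (‖u‖ * ‖v‖))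

lemma cangle_exp (r r' a b : ℝ) (hr : 0 < r) (hr' : 0 < r') :
    cangle ((r : ℂ) * Complex.exp (a * Complex.I)) ((r' : ℂ) * Complex.exp (b * Complex.I))
      = Real.arccos (Real.cos (a - b)) := by
  unfold cangle
  have hexp : ∀ x : ℝ, Complex.exp ((x:ℝ) * Complex.I)
      = ((Real.cos x : ℝ) : ℂ) + ((Real.sin x : ℝ) : ℂ) * Complex.I := by
    intro x
    rw [Complex.exp_mul_I, ← Complex.ofReal_cos, ← Complex.ofReal_sin]
  have h1 : ((r : ℂ) * Complex.exp (a * Complex.I) *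
      (starRingEnd ℂ) ((r' : ℂ) * Complex.exp (b * Complex.I))) =
      ((r * r' : ℝ) : ℂ) * Complex.exp (((a - b : ℝ)) * Complex.I) := by
    rw [map_mul, ← Complex.exp_conj]
    have hc : (starRingEnd ℂ) ((b:ℝ) * Complex.I) = -((b:ℝ) * Complex.I) := by
      simp [Complex.ext_iff]
    have hab : ((a - b : ℝ) : ℂ) * Complex.I = (a:ℝ) * Complex.I + -((b:ℝ) * Complex.I) := by
      push_cast; ring
    rw [hc, Complex.conj_ofReal, hab, Complex.exp_add]
    push_cast; ring
  rw [h1]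
  have h2 : (((r * r' : ℝ) : ℂ) * Complex.exp (((a - b : ℝ)) * Complex.I)).re
      = (r * r') * Real.cos (a - b) := by
    rw [hexp]
    simp only [Complex.mul_re, Complex.add_re, Complex.add_im, Complex.ofReal_re,
      Complex.ofReal_im, Complex.mul_im, Complex.I_re, Complex.I_im]
    ring
  rw [h2]
  have h3 : ‖(r : ℂ) * Complex.exp (a * Complex.I)‖ = r := by
    rw [norm_mul, Complex.norm_exp_ofReal_mul_I, Complex.norm_real, Real.norm_eq_abs, abs_of_pos hr, mul_one]
  have h4 : ‖(r' : ℂ) * Complex.exp (b * Complex.I)‖ = r' := by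
    rw [norm_mul, Complex.norm_exp_ofReal_mul_I, Complex.norm_real, Real.norm_eq_abs, abs_of_pos hr', mul_one]
  rw [h3, h4]
  congr 1
  field_simp

open Finset in
theorem stmt17 (θ₀ : ℝ) (hθ₀ : 0 < θ₀) :
    ∃ (θ : ℝ) (v : (Fin 3 → Bool) → ℂ), 0 < θ ∧ θ < θ₀ ∧
      (∀ s, v s ≠ 0) ∧
      (∀ s t : Fin 3 → Bool,
        (univ.filter (fun i => s i ≠ t i)).card = 1 → cangle (v s) (v t) ≤ θ) ∧
      (∑ s, v s) ≠ 0 ∧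
      |((∑ s : Fin 3 → Bool,
            (-1 : ℂ) ^ (univ.filter (fun i => s i = false)).card * v s) /
          ∑ s, v s).im| > Real.tan (θ / 2) := by
  set θ : ℝ := min θ₀ 1 / 2 with hθdef
  have hθpos : 0 < θ := by positivity
  have hθle : θ ≤ 1 / 2 := by
    rw [hθdef]; have := min_le_right θ₀ 1; linarith
  have hθltθ₀ : θ < θ₀ := by
    rw [hθdef]
    rcases le_total θ₀ 1 with h | h
    · rw [min_eq_left h]; linarith
    · rw [min_eq_right h]; linarith
  have hθltpi : θ ≤ Real.pi := le_trans (by linarith) (by linarith [Real.pi_gt_three])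
  set ct : Fin 3 → Bool := fun _ => true with hct
  set cf : Fin 3 → Bool := fun _ => false with hcf
  set φ : (Fin 3 → Bool) → ℝ := fun s => if s = ct then 2 * θ else if s = cf then 0 else θ
    with hφ
  set r : (Fin 3 → Bool) → ℝ := fun s => if s = ct ∨ s = cf then 1 else 1 / 4 with hr
  have hrpos : ∀ s, 0 < r s := by
    intro s; rw [hr]; dsimp only; split <;> norm_num
  refine ⟨θ, fun s => (r s : ℂ) * Complex.exp ((φ s : ℝ) * Complex.I), hθpos, hθltθ₀,
    ?_, ?_, ?_⟩
  · intro s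
    apply mul_ne_zero
    · exact_mod_cast (hrpos s).ne'
    · exact Complex.exp_ne_zero _
  · intro s t hst
    rw [cangle_exp _ _ _ _ (hrpos s) (hrpos t)]
    have hclass : s ≠ t ∧ ¬(s = ct ∧ t = cf) ∧ ¬(s = cf ∧ t = ct) := by
      revert hst; revert s t; decide
    obtain ⟨hne, h1, h2⟩ := hclass
    have key : φ s - φ t = 0 ∨ φ s - φ t = θ ∨ φ s - φ t = -θ := by
      rw [hφ]; dsimp only
      by_cases hs1 : s = ct <;> by_cases hs2 : s = cf <;>
        by_cases ht1 : t = ct <;> by_cases ht2 : t = cf <;>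
        simp_all <;> ring_nf <;> tauto
    rcases key with h | h | h
    · rw [h, Real.cos_zero, Real.arccos_one]; linarith
    · rw [h, Real.arccos_cos hθpos.le hθltpi]
    · rw [h, Real.cos_neg, Real.arccos_cos hθpos.le hθltpi]
  · -- compute the sums
    have hsub : ({ct, cf} : Finset (Fin 3 → Bool)) ⊆ univ := subset_univ _
    have hctcf : ct ≠ cf := by decide
    set M : Finset (Fin 3 → Bool) := univ \ {ct, cf} with hM
    have hsplit : ∀ f : (Fin 3 → Bool) → ℂ,
        ∑ s, f s = f ct + f cf + ∑ s ∈ M, f s := by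
      intro f
      rw [← Finset.sum_sdiff hsub, Finset.sum_pair hctcf]
      ring
    have hMmem : ∀ s ∈ M, s ≠ ct ∧ s ≠ cf := by
      intro s hs
      rw [hM, Finset.mem_sdiff, Finset.mem_insert, Finset.mem_singleton] at hs
      tauto
    have hφct : φ ct = 2 * θ := by simp only [hφ, if_pos rfl]
    have hφcf : φ cf = 0 := by
      simp only [hφ]
      rw [if_neg (fun h => hctcf h.symm)]
      simp
    have hrct : r ct = 1 := by simp only [hr]; simp
    have hrcf : r cf = 1 := by simp only [hr]; simp
    have hφM : ∀ s ∈ M, φ s = θ := by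
      intro s hs; obtain ⟨h1, h2⟩ := hMmem s hs
      simp only [hφ]; rw [if_neg h1, if_neg h2]
    have hrM : ∀ s ∈ M, r s = 1 / 4 := by
      intro s hs; obtain ⟨h1, h2⟩ := hMmem s hs
      simp only [hr]; rw [if_neg (by tauto)]
    -- denominator
    have hD : (∑ s, (r s : ℂ) * Complex.exp ((φ s : ℝ) * Complex.I)) =
        Complex.exp (((2*θ : ℝ)) * Complex.I) + 1 +
          (3/2 : ℂ) * Complex.exp ((θ : ℝ) * Complex.I) := by
      rw [hsplit]
      have hMsum : ∑ s ∈ M, (r s : ℂ) * Complex.exp ((φ s : ℝ) * Complex.I)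
          = ∑ s ∈ M, ((1/4 : ℝ) : ℂ) * Complex.exp ((θ : ℝ) * Complex.I) := by
        apply Finset.sum_congr rfl
        intro s hs; rw [hφM s hs, hrM s hs]
      rw [hMsum, Finset.sum_const]
      have hcard : M.card = 6 := by rw [hM]; decide
      rw [hcard, hφct, hφcf, hrct, hrcf]
      push_cast
      simp only [Complex.ofReal_zero, zero_mul, Complex.exp_zero]
      ring
    -- numerator
    have hN : (∑ s : Fin 3 → Bool,
          (-1 : ℂ) ^ (univ.filter (fun i => s i = false)).card *
            ((r s : ℂ) * Complex.exp ((φ s : ℝ) * Complex.I))) =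
        Complex.exp (((2*θ : ℝ)) * Complex.I) - 1 := by
      rw [hsplit]
      have hMsum : ∑ s ∈ M, (-1 : ℂ) ^ (univ.filter (fun i => s i = false)).card *
            ((r s : ℂ) * Complex.exp ((φ s : ℝ) * Complex.I))
          = (∑ s ∈ M, (((-1 : ℤ) ^ (univ.filter (fun i => s i = false)).card : ℤ) : ℂ)) *
            (((1/4 : ℝ) : ℂ) * Complex.exp ((θ : ℝ) * Complex.I)) := by
        rw [Finset.sum_mul]
        apply Finset.sum_congr rfl
        intro s hs; rw [hφM s hs, hrM s hs]; push_cast; ring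
      have hz : (∑ s ∈ M, (((-1 : ℤ) ^ (univ.filter (fun i => s i = false)).card : ℤ) : ℂ))
          = ((∑ s ∈ M, ((-1 : ℤ) ^ (univ.filter (fun i => s i = false)).card) : ℤ) : ℂ) := by
        push_cast; rfl
      have hz2 : (∑ s ∈ M, ((-1 : ℤ) ^ (univ.filter (fun i => s i = false)).card)) = 0 := by
        rw [hM]; decide
      rw [hMsum, hz, hz2]
      have hcardct : (univ.filter (fun i => ct i = false)).card = 0 := by decide
      have hcardcf : (univ.filter (fun i => cf i = false)).card = 3 := by decide
      rw [hcardct, hcardcf, hφct, hφcf, hrct, hrcf]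
      push_cast
      simp only [Complex.ofReal_zero, zero_mul, Complex.exp_zero]
      ring
    -- trig facts
    have hcosθpos : 0 < Real.cos θ :=
      Real.cos_pos_of_mem_Ioo ⟨by linarith [Real.pi_gt_three], by linarith [Real.pi_gt_three]⟩
    have hsinθpos : 0 < Real.sin θ := by
      apply Real.sin_pos_of_pos_of_lt_pi hθpos
      linarith [Real.pi_gt_three]
    have hexp : ∀ x : ℝ, Complex.exp ((x:ℝ) * Complex.I)
        = ((Real.cos x : ℝ) : ℂ) + ((Real.sin x : ℝ) : ℂ) * Complex.I := by
      intro x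
      rw [Complex.exp_mul_I, Complex.ofReal_cos, Complex.ofReal_sin]
    have hsc : Real.sin θ ^ 2 + Real.cos θ ^ 2 = 1 := Real.sin_sq_add_cos_sq θ
    have hcos2 : Real.cos (2*θ) = 2 * Real.cos θ ^ 2 - 1 := Real.cos_two_mul θ
    have hsin2 : Real.sin (2*θ) = 2 * Real.sin θ * Real.cos θ := Real.sin_two_mul θ
    -- factored forms
    have hfacD : Complex.exp (((2*θ : ℝ)) * Complex.I) + 1 +
          (3/2 : ℂ) * Complex.exp ((θ : ℝ) * Complex.I)
        = Complex.exp ((θ : ℝ) * Complex.I) * (((2 * Real.cos θ + 3/2 : ℝ)) : ℂ) := by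
      rw [hexp, hexp]
      rw [hcos2, hsin2]
      push_cast
      ring
    have hfacN : Complex.exp (((2*θ : ℝ)) * Complex.I) - 1
        = Complex.exp ((θ : ℝ) * Complex.I) *
            (((2 * Real.sin θ : ℝ)) : ℂ) * Complex.I := by
      have hsc' : Complex.sin ((θ : ℝ) : ℂ) ^ 2 + Complex.cos ((θ : ℝ) : ℂ) ^ 2 = 1 :=
        Complex.sin_sq_add_cos_sq _
      rw [hexp, hexp]
      rw [hcos2, hsin2]
      push_cast [Complex.ofReal_cos, Complex.ofReal_sin]
      linear_combination (-2 * Complex.sin ((θ : ℝ) : ℂ) ^ 2) * Complex.I_sq + 2 * hsc'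
    have hden : (2 * Real.cos θ + 3/2 : ℝ) ≠ 0 := by positivity
    have hDne : Complex.exp ((θ : ℝ) * Complex.I) * (((2 * Real.cos θ + 3/2 : ℝ)) : ℂ) ≠ 0 := by
      apply mul_ne_zero (Complex.exp_ne_zero _)
      exact_mod_cast hden
    constructor
    · rw [hD, hfacD]; exact hDne
    · rw [hD, hN, hfacD, hfacN]
      have hne2 : ((2 * Real.cos θ + 3/2 : ℝ) : ℂ) ≠ 0 := by exact_mod_cast hden
      have hquot : Complex.exp ((θ : ℝ) * Complex.I) * (((2 * Real.sin θ : ℝ)) : ℂ) *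
            Complex.I / (Complex.exp ((θ : ℝ) * Complex.I) *
              (((2 * Real.cos θ + 3/2 : ℝ)) : ℂ))
          = (((2 * Real.sin θ / (2 * Real.cos θ + 3/2) : ℝ)) : ℂ) * Complex.I := by
        rw [mul_assoc, mul_div_mul_left _ _ (Complex.exp_ne_zero _), Complex.ofReal_div,
          div_mul_eq_mul_div]
      rw [hquot]
      have him : ((((2 * Real.sin θ / (2 * Real.cos θ + 3/2) : ℝ)) : ℂ) * Complex.I).im
          = 2 * Real.sin θ / (2 * Real.cos θ + 3/2) := by rw [Complex.mul_I_im, Complex.ofReal_re]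
      rw [him]
      have hxpos : 0 < 2 * Real.sin θ / (2 * Real.cos θ + 3/2) := by positivity
      rw [abs_of_pos hxpos]
      -- half-angle facts
      have hs2 : Real.sin θ = 2 * Real.sin (θ/2) * Real.cos (θ/2) := by
        have h := Real.sin_two_mul (θ/2)
        rw [show 2 * (θ/2) = θ by ring] at h
        exact h
      have hc2 : Real.cos θ = 2 * Real.cos (θ/2) ^ 2 - 1 := by
        have h := Real.cos_two_mul (θ/2)
        rw [show 2 * (θ/2) = θ by ring] at h
        exact h
      have hc2pos : 0 < Real.cos (θ/2) :=
        Real.cos_pos_of_mem_Ioo ⟨by linarith [Real.pi_gt_three], by linarith [Real.pi_gt_three]⟩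
      have hs2pos : 0 < Real.sin (θ/2) :=
        Real.sin_pos_of_pos_of_lt_pi (by linarith) (by linarith [Real.pi_gt_three])
      rw [gt_iff_lt, Real.tan_eq_sin_div_cos]
      rw [div_lt_div_iff₀ hc2pos (by positivity)]
      rw [hs2, hc2]
      nlinarith [hs2pos, hc2pos]
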